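/- Core of Theorem 3 (completeness, bivariate case): oracle-indistinguishability of G and G plus one edge. Let G be a DAG on a finite vertex set, let X1 and X2 be distinct vertices, let Z be a set of non-descendants of {X1, X2}, and suppose X2 is not an ancestor of X1, so that G' := G with the edge X1 → X2 added is again a DAG. Suppose that in G: (a) X1 and X2 are d-connected given Z; and (b) for every W ∈ Z, none of the following four patterns holds in G: (i) W and X2 are d-connected given Z \ {W} and d-separated given (Z \ {W}) ∪ {X1}; (ii) W and X1 are d-connected given Z \ {W} and d-separated given (Z \ {W}) ∪ {X2}; (iii) W and X2 are d-separated given Z \ {W} and d-connected given (Z \ {W}) ∪ {X1}; (iv) W and X1 are d-separated given Z \ {W} and d-connected given (Z \ {W}) ∪ {X2}. Then X1 and X2 are d-connected given Z in G', and for every W ∈ Z none of the four patterns (i)–(iv) holds in G'. -/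

import Mathlib

/-- `Ancestor E x y` : there is a nonempty directed path from `x` to `y` in the
directed graph with edge relation `E`; i.e. `x` is an ancestor of `y` and `y` a
descendant of `x`. -/
def Ancestor {α : Type*} (E : α → α → Prop) (x y : α) : Prop :=
  Relation.TransGen E x y

/-- A directed graph is acyclic (a DAG) if it has no directed cycle. -/
def Acyclic {α : Type*} (E : α → α → Prop) : Prop :=
  ∀ v, ¬ Ancestor E v v

/-- `A` is a set of non-descendants of `{x, y}`. -/
def NonDescSet {α : Type*} (E : α → α → Prop) (x y : α) (A : Set α) : Prop :=
  x ∉ A ∧ y ∉ A ∧ ∀ a ∈ A, ¬ Ancestor E x a ∧ ¬ Ancestor E y a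

/-- A walk of length `n` with vertex sequence `v 0, v 1, …, v n` and directions `d`:
`d i = true` means the edge `v i → v (i+1)` is in the graph (traversed forwards),
`d i = false` means the edge `v (i+1) → v i` is in the graph (traversed backwards). -/
def IsWalk {α : Type*} (E : α → α → Prop) (n : ℕ) (v : ℕ → α) (d : ℕ → Bool) : Prop :=
  ∀ i < n, if d i = true then E (v i) (v (i+1)) else E (v (i+1)) (v i)

/-- The interior vertex at position `j` (for `0 < j < n`) is a collider on the walk:
both incident edges of the walk point into it. -/
def IsColliderAt (d : ℕ → Bool) (j : ℕ) : Prop :=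
  d (j - 1) = true ∧ d j = false

/-- The activeness condition for a walk given conditioning set `C`: every collider is
in `C` or has a descendant in `C`, and no non-collider is in `C`. -/
def ActiveCond {α : Type*} (E : α → α → Prop) (C : Set α) (n : ℕ) (v : ℕ → α)
    (d : ℕ → Bool) : Prop :=
  ∀ j, 0 < j → j < n →
    (IsColliderAt d j → v j ∈ C ∨ ∃ w ∈ C, Ancestor E (v j) w) ∧
    (¬ IsColliderAt d j → v j ∉ C)

/-- An active walk given `C`: a walk satisfying the activeness condition. -/
def ActiveWalk {α : Type*} (E : α → α → Prop) (C : Set α) (n : ℕ) (v : ℕ → α)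
    (d : ℕ → Bool) : Prop :=
  IsWalk E n v d ∧ ActiveCond E C n v d

/-- `x` and `y` are d-connected given `C`: some walk between them is active given `C`. -/
def DConnected {α : Type*} (E : α → α → Prop) (C : Set α) (x y : α) : Prop :=
  ∃ n v d, v 0 = x ∧ v n = y ∧ ActiveWalk E C n v d

/-- `x` and `y` are d-separated given `C`: no walk between them is active given `C`. -/
def DSeparated {α : Type*} (E : α → α → Prop) (C : Set α) (x y : α) : Prop :=
  ¬ DConnected E C x y

/-- For `W ∈ Z`, one of the four (de)activation patterns (i)–(iv) relative to the pair
`(X1, X2)` and conditioning base `Z` holds in the graph with edge relation `E`. -/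
def SomePattern {α : Type*} (E : α → α → Prop) (Z : Set α) (X1 X2 W : α) : Prop :=
  (DConnected E (Z \ {W}) W X2 ∧ DSeparated E ((Z \ {W}) ∪ {X1}) W X2) ∨
  (DConnected E (Z \ {W}) W X1 ∧ DSeparated E ((Z \ {W}) ∪ {X2}) W X1) ∨
  (DSeparated E (Z \ {W}) W X2 ∧ DConnected E ((Z \ {W}) ∪ {X1}) W X2) ∨
  (DSeparated E (Z \ {W}) W X1 ∧ DConnected E ((Z \ {W}) ∪ {X2}) W X1)

section Walks
variable {α : Type*} {E F : α → α → Prop} {C : Set α} {n : ℕ} {v : ℕ → α} {d : ℕ → Bool}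

lemma anc_mono (h : ∀ a b, E a b → F a b) {a b : α} (hab : Ancestor E a b) :
    Ancestor F a b := Relation.TransGen.mono h a b hab

lemma activeWalk_mono (h : ∀ a b, E a b → F a b) (hw : ActiveWalk E C n v d) :
    ActiveWalk F C n v d := by
  obtain ⟨hw1, hw2⟩ := hw
  refine ⟨fun i hi => ?_, fun j hj1 hj2 => ?_⟩
  · have := hw1 i hi
    split at this <;> simp_all [h _ _ this]
  · refine ⟨fun hc => ?_, fun hc => (hw2 j hj1 hj2).2 hc⟩
    rcases (hw2 j hj1 hj2).1 hc with h1 | ⟨w, hw, ha⟩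
    · exact Or.inl h1
    · exact Or.inr ⟨w, hw, anc_mono h ha⟩

lemma activeWalk_prefix (hw : ActiveWalk E C n v d) {m : ℕ} (hm : m ≤ n) :
    ActiveWalk E C m v d :=
  ⟨fun i hi => hw.1 i (lt_of_lt_of_le hi hm),
   fun j hj1 hj2 => hw.2 j hj1 (lt_of_lt_of_le hj2 hm)⟩

lemma activeWalk_suffix (hw : ActiveWalk E C n v d) {k : ℕ} (_hk : k ≤ n) :
    ActiveWalk E C (n - k) (fun j => v (k + j)) (fun j => d (k + j)) := by
  refine ⟨fun i hi => ?_, fun j hj1 hj2 => ?_⟩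
  · have := hw.1 (k + i) (by omega)
    simpa [Nat.add_assoc] using this
  · have h := hw.2 (k + j) (by omega) (by omega)
    have hcol : IsColliderAt (fun j => d (k + j)) j ↔ IsColliderAt d (k + j) := by
      simp only [IsColliderAt]
      have e : k + j - 1 = k + (j - 1) := by omega
      rw [e]
    constructor
    · intro hc; exact h.1 (hcol.mp hc)
    · intro hc; exact fun hm => h.2 (fun hcd => hc (hcol.mpr hcd)) hm

lemma activeWalk_reverse (hw : ActiveWalk E C n v d) :
    ActiveWalk E C n (fun j => v (n - j)) (fun j => !(d (n - 1 - j))) := by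
  refine ⟨fun i hi => ?_, fun j hj1 hj2 => ?_⟩
  · have := hw.1 (n - 1 - i) (by omega)
    have e1 : n - i = n - 1 - i + 1 := by omega
    have e2 : n - (i + 1) = n - 1 - i := by omega
    rcases Bool.eq_false_or_eq_true (d (n - 1 - i)) with hb | hb <;>
      simp [hb, e1, e2] at this ⊢ <;> exact this
  · have h := hw.2 (n - j) (by omega) (by omega)
    have hcol : IsColliderAt (fun j => !(d (n - 1 - j))) j ↔ IsColliderAt d (n - j) := by
      simp only [IsColliderAt]
      have e1 : n - 1 - (j - 1) = n - j := by omega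
      have e2 : n - j - 1 = n - 1 - j := by omega
      rw [e1, e2]
      rcases Bool.eq_false_or_eq_true (d (n - j)) with hb1 | hb1 <;>
        rcases Bool.eq_false_or_eq_true (d (n - 1 - j)) with hb2 | hb2 <;>
          simp [hb1, hb2]
    constructor
    · intro hc; exact h.1 (hcol.mp hc)
    · intro hc; exact fun hm => h.2 (fun hcd => hc (hcol.mpr hcd)) hm

end Walks
section Walks2
variable {α : Type*} {E : α → α → Prop} {C : Set α}

/-- Concatenation of two active walks sharing endpoint, with a junction guard. -/
lemma activeWalk_concat {n1 n2 : ℕ} {v1 v2 : ℕ → α} {d1 d2 : ℕ → Bool}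
    (h1 : ActiveWalk E C n1 v1 d1) (h2 : ActiveWalk E C n2 v2 d2)
    (hj : v1 n1 = v2 0)
    (hguard : 0 < n1 → 0 < n2 →
      ((d1 (n1 - 1) = true ∧ d2 0 = false) →
          (v2 0 ∈ C ∨ ∃ w ∈ C, Ancestor E (v2 0) w)) ∧
      (¬ (d1 (n1 - 1) = true ∧ d2 0 = false) → v2 0 ∉ C)) :
    ActiveWalk E C (n1 + n2) (fun j => if j < n1 then v1 j else v2 (j - n1))
      (fun j => if j < n1 then d1 j else d2 (j - n1)) := by
  set V : ℕ → α := fun j => if j < n1 then v1 j else v2 (j - n1) with hV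
  set D : ℕ → Bool := fun j => if j < n1 then d1 j else d2 (j - n1) with hD
  have hVlt : ∀ j, j < n1 → V j = v1 j := fun j h => by simp [hV, h]
  have hVge : ∀ j, n1 ≤ j → V j = v2 (j - n1) := fun j h => by
    simp [hV, Nat.not_lt.mpr h]
  have hVn1 : V n1 = v2 0 := by rw [hVge n1 le_rfl]; simp
  have hDlt : ∀ j, j < n1 → D j = d1 j := fun j h => by simp [hD, h]
  have hDge : ∀ j, n1 ≤ j → D j = d2 (j - n1) := fun j h => by
    simp [hD, Nat.not_lt.mpr h]
  constructor
  · intro i hi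
    by_cases hc : i + 1 < n1
    · have := h1.1 i (by omega)
      rw [hDlt i (by omega), hVlt i (by omega), hVlt (i+1) hc]
      exact this
    · by_cases hc2 : i < n1
      · -- i + 1 = n1
        have hin : i + 1 = n1 := by omega
        have := h1.1 i (by omega)
        rw [hDlt i hc2, hVlt i hc2, hVge (i+1) (by omega), hin]
        simpa [← hj, hin] using this
      · have := h2.1 (i - n1) (by omega)
        rw [hDge i (by omega), hVge i (by omega), hVge (i+1) (by omega)]
        have e : i + 1 - n1 = i - n1 + 1 := by omega
        rw [e]
        exact this
  · intro j hj1 hj2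
    have hcolV : ∀ j, 0 < j → j < n1 → (IsColliderAt D j ↔ IsColliderAt d1 j) := by
      intro j a b
      unfold IsColliderAt
      rw [hDlt j b, hDlt (j-1) (by omega)]
    have hcolV2 : ∀ j, n1 < j → (IsColliderAt D j ↔ IsColliderAt d2 (j - n1)) := by
      intro j a
      unfold IsColliderAt
      rw [hDge j (by omega), hDge (j-1) (by omega)]
      have e : j - 1 - n1 = j - n1 - 1 := by omega
      rw [e]
    by_cases hc : j < n1
    · have h := h1.2 j hj1 hc
      rw [hVlt j hc]
      constructor
      · intro hcd; exact h.1 ((hcolV j hj1 hc).mp hcd)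
      · intro hcd; exact h.2 (fun hx => hcd ((hcolV j hj1 hc).mpr hx))
    · by_cases hc2 : n1 < j
      · have h := h2.2 (j - n1) (by omega) (by omega)
        rw [hVge j (by omega)]
        constructor
        · intro hcd; exact h.1 ((hcolV2 j hc2).mp hcd)
        · intro hcd; exact h.2 (fun hx => hcd ((hcolV2 j hc2).mpr hx))
      · -- j = n1 : junction
        have hjn : j = n1 := by omega
        subst hjn
        have hg := hguard hj1 (by omega)
        have hcolj : IsColliderAt D j ↔ (d1 (j - 1) = true ∧ d2 0 = false) := by
          unfold IsColliderAt
          rw [hDlt (j-1) (by omega), hDge j le_rfl]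
          simp
        rw [hVn1]
        constructor
        · intro hcd; exact hg.1 (hcolj.mp hcd)
        · intro hcd; exact hg.2 (fun hx => hcd (hcolj.mpr hx))

/-- endpoints of the concatenated walk -/
lemma concat_ends {n1 n2 : ℕ} {v1 v2 : ℕ → α} (hj : v1 n1 = v2 0) :
    (fun j => if j < n1 then v1 j else v2 (j - n1)) 0 = v1 0 ∧
    (fun j => if j < n1 then v1 j else v2 (j - n1)) (n1 + n2) = v2 n2 := by
  constructor
  · by_cases h : 0 < n1
    · simp [h]
    · have hn : n1 = 0 := by omega
      subst hn
      simp [← hj]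
  · have h : ¬ (n1 + n2 < n1) := by omega
    simp only [h, if_false]
    congr 1
    omega

end Walks2
section Walks3
variable {α : Type*} {E : α → α → Prop} {C : Set α}

lemma dirPath_of_anc {a b : α} (h : Ancestor E a b) :
    ∃ (m : ℕ) (p : ℕ → α), 0 < m ∧ p 0 = a ∧ p m = b ∧ (∀ i < m, E (p i) (p (i+1))) ∧
      ∀ i, 0 < i → i < m → Ancestor E a (p i) ∧ Ancestor E (p i) b := by
  induction h with
  | @single b hab =>
    exact ⟨1, fun i => if i = 0 then a else b, one_pos, by simp, by simp,
      fun i hi => by simp [show i = 0 by omega, hab], fun i h1 h2 => by omega⟩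
  | @tail c b hac hcb ih =>
    obtain ⟨m, p, hm, hp0, hpm, he, hint⟩ := ih
    refine ⟨m + 1, fun i => if i ≤ m then p i else b, by omega, by simp [hp0],
      by simp, ?_, ?_⟩
    · intro i hi
      by_cases hc : i < m
      · simp only [show i ≤ m by omega, if_pos, show i + 1 ≤ m by omega]
        exact he i hc
      · have him : i = m := by omega
        subst him
        show E (if i ≤ i then p i else b) (if i + 1 ≤ i then p (i+1) else b)
        rw [if_pos (le_refl i), if_neg (by omega : ¬ i + 1 ≤ i), hpm]
        exact hcb
    · intro i h1 h2
      by_cases hc : i < m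
      · simp only [show i ≤ m by omega, if_pos]
        exact ⟨(hint i h1 hc).1, Relation.TransGen.tail (hint i h1 hc).2 hcb⟩
      · have : i = m := by omega
        subst this
        simp only [le_rfl, if_pos, hpm]
        exact ⟨hac, Relation.TransGen.single hcb⟩

lemma activeWalk_dir {m : ℕ} {p : ℕ → α} (he : ∀ i < m, E (p i) (p (i+1)))
    (hint : ∀ i, 0 < i → i < m → p i ∉ C) :
    ActiveWalk E C m p (fun _ => true) := by
  refine ⟨fun i hi => by simpa using he i hi, fun j h1 h2 => ?_⟩
  have hnc : ¬ IsColliderAt (fun _ => true) j := by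
    intro h; simpa using h.2
  exact ⟨fun h => absurd h hnc, fun _ => hint j h1 h2⟩

lemma activeWalk_single_fwd {a b : α} (hab : E a b) :
    ActiveWalk E C 1 (fun i => if i = 0 then a else b) (fun _ => true) := by
  refine ⟨fun i hi => by simp [show i = 0 by omega, hab], fun j h1 h2 => by omega⟩

lemma activeWalk_single_bwd {a b : α} (hba : E b a) :
    ActiveWalk E C 1 (fun i => if i = 0 then a else b) (fun _ => false) := by
  refine ⟨fun i hi => by simp [show i = 0 by omega, hba], fun j h1 h2 => by omega⟩

lemma first_occ {v : ℕ → α} {n : ℕ} {x : α} (hn : v n = x) (h0 : v 0 ≠ x) :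
    ∃ m, 0 < m ∧ m ≤ n ∧ v m = x ∧ ∀ i < m, v i ≠ x := by
  classical
  have hex : ∃ i, v i = x := ⟨n, hn⟩
  set m := Nat.find hex with hmdef
  have hvm : v m = x := Nat.find_spec hex
  have hlt : ∀ i < m, v i ≠ x := fun i hi => Nat.find_min hex hi
  have hm0 : 0 < m := by
    rcases Nat.eq_zero_or_pos m with h | h
    · exact absurd (h ▸ hvm) h0
    · exact h
  have hmn : m ≤ n := Nat.find_min' hex hn
  exact ⟨m, hm0, hmn, hvm, hlt⟩

lemma dconn_symm {x y : α} (h : DConnected E C x y) : DConnected E C y x := by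
  obtain ⟨n, v, d, h0, hn, hw⟩ := h
  exact ⟨n, _, _, by simpa [hn], by simpa [h0], activeWalk_reverse hw⟩

end Walks3
section AddEdge
variable {α : Type*} {E E' : α → α → Prop} {X1 X2 : α} {Z C : Set α}

lemma ancE'_elim (hE' : ∀ a b, E' a b ↔ (E a b ∨ (a = X1 ∧ b = X2)))
    {a b : α} (h : Ancestor E' a b) :
    Ancestor E a b ∨ ((a = X1 ∨ Ancestor E a X1) ∧ (b = X2 ∨ Ancestor E X2 b)) := by
  induction h with
  | @single b hab =>
    rcases (hE' a b).mp hab with h | ⟨h1, h2⟩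
    · exact Or.inl (Relation.TransGen.single h)
    · exact Or.inr ⟨Or.inl h1, Or.inl h2⟩
  | @tail c b hac hcb ih =>
    rcases (hE' c b).mp hcb with h | ⟨h1, h2⟩
    · rcases ih with h' | ⟨ha, hc'⟩
      · exact Or.inl (Relation.TransGen.tail h' h)
      · refine Or.inr ⟨ha, Or.inr ?_⟩
        rcases hc' with rfl | hc'
        · exact Relation.TransGen.single h
        · exact Relation.TransGen.tail hc' h
    · subst h1; subst h2
      rcases ih with h' | ⟨ha, _⟩
      · exact Or.inr ⟨Or.inr h', Or.inl rfl⟩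
      · exact Or.inr ⟨ha, Or.inl rfl⟩

variable (hE' : ∀ a b, E' a b ↔ (E a b ∨ (a = X1 ∧ b = X2)))
  (hne : X1 ≠ X2) (hnanc : ¬ Ancestor E X2 X1) (hZ : NonDescSet E X1 X2 Z)

include hE' hne hnanc in
lemma ancE'_X1 {a : α} (h : Ancestor E' a X1) : Ancestor E a X1 := by
  rcases ancE'_elim hE' h with h | ⟨_, h2⟩
  · exact h
  · rcases h2 with h2 | h2
    · exact absurd h2 hne
    · exact absurd h2 hnanc

include hE' hZ in
lemma ancE'_Z {a b : α} (hb : b ∈ Z) (h : Ancestor E' a b) : Ancestor E a b := by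
  rcases ancE'_elim hE' h with h | ⟨_, h2⟩
  · exact h
  · rcases h2 with rfl | h2
    · exact absurd hb hZ.2.1
    · exact absurd h2 (hZ.2.2 b hb).2

include hE' hne hnanc hZ in
lemma not_ancE'_X2 {u : α} (hu : u ∈ Z ∨ u = X1) : u ≠ X2 ∧ ¬ Ancestor E' X2 u := by
  constructor
  · rcases hu with hu | rfl
    · rintro rfl; exact hZ.2.1 hu
    · exact hne
  · intro h
    rcases ancE'_elim hE' h with h | ⟨h1, _⟩
    · rcases hu with hu | rfl
      · exact (hZ.2.2 u hu).2 h
      · exact hnanc h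
    · rcases h1 with h1 | h1
      · exact hne h1.symm
      · exact hnanc h1

include hE' in
lemma ancE'_X2_cases {a : α} (h : Ancestor E' a X2) :
    Ancestor E a X2 ∨ a = X1 ∨ Ancestor E a X1 := by
  rcases ancE'_elim hE' h with h | ⟨h1, _⟩
  · exact Or.inl h
  · exact Or.inr h1

include hE' in
lemma ancE'_to_X2 {a : α} (h : a = X1 ∨ Ancestor E a X1) : Ancestor E' a X2 := by
  have hedge : E' X1 X2 := (hE' X1 X2).mpr (Or.inr ⟨rfl, rfl⟩)
  rcases h with rfl | h
  · exact Relation.TransGen.single hedge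
  · exact Relation.TransGen.tail
      (anc_mono (fun a b hab => (hE' a b).mpr (Or.inl hab)) h) hedge

/-- the downward chain lemma: in an active walk whose conditioning set avoids `X2`
and its `E'`-descendants, and whose start is not `X2` nor an `E'`-descendant of `X2`,
every occurrence of `X2` has its left edge pointing into it. -/
lemma chain_lemma {n : ℕ} {v : ℕ → α} {d : ℕ → Bool}
    (havoid : ∀ u ∈ C, ¬ Ancestor E' X2 u)
    (hw : ActiveWalk E' C n v d) (h0 : ¬ Ancestor E' X2 (v 0))
    {i : ℕ} (h1 : 1 ≤ i) (h2 : i ≤ n) (hvi : v i = X2) : d (i-1) = true := by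
  by_contra hd
  have hd : d (i-1) = false := by
    rcases Bool.eq_false_or_eq_true (d (i-1)) with h | h
    · exact absurd h hd
    · exact h
  have hQ : ∀ k, k ≤ i - 1 → (d (i-1-k) = false ∧ Ancestor E' X2 (v (i-1-k))) := by
    intro k
    induction k with
    | zero =>
      intro _
      refine ⟨by simpa using hd, ?_⟩
      have hwi : E' (v (i - 1 + 1)) (v (i - 1)) := by
        simpa [hd] using hw.1 (i-1) (by omega)
      have e : i - 1 + 1 = i := by omega
      rw [e, hvi] at hwi
      exact Relation.TransGen.single hwi
    | succ k ih =>
      intro hk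
      obtain ⟨hdj, hanc⟩ := ih (by omega)
      set j := i - 1 - k with hjdef
      have hj1 : 1 ≤ j := by omega
      have hjn : j < n := by omega
      have hcnd := hw.2 j (by omega) hjn
      have hnotcol : ¬ IsColliderAt d j := by
        intro hcol
        rcases hcnd.1 hcol with hin | ⟨w, hwC, hancw⟩
        · exact havoid _ hin hanc
        · exact havoid _ hwC (hanc.trans hancw)
      have hdj1 : d (j-1) = false := by
        rcases Bool.eq_false_or_eq_true (d (j-1)) with h | h
        · exact absurd ⟨h, hdj⟩ hnotcol
        · exact h
      have hwj : E' (v (j - 1 + 1)) (v (j - 1)) := by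
        simpa [hdj1] using hw.1 (j-1) (by omega)
      have e : j - 1 + 1 = j := by omega
      rw [e] at hwj
      have e2 : i - 1 - (k+1) = j - 1 := by omega
      rw [e2]
      exact ⟨hdj1, Relation.TransGen.tail hanc hwj⟩
  have := (hQ (i-1) le_rfl).2
  simp only [Nat.sub_self] at this
  exact h0 this

end AddEdge
section Main
variable {α : Type*} {E E' : α → α → Prop} {X1 X2 W : α} {Z : Set α}

variable (hG : Acyclic E) (hne : X1 ≠ X2)
  (hZ : NonDescSet E X1 X2 Z) (hnanc : ¬ Ancestor E X2 X1)
  (hE' : ∀ a b, E' a b ↔ (E a b ∨ (a = X1 ∧ b = X2)))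
  (hW : W ∈ Z)

include hE' in
lemma edge_cases {n : ℕ} {v : ℕ → α} {d : ℕ → Bool} (hw : IsWalk E' n v d)
    {i : ℕ} (hi : i < n) :
    (if d i = true then E (v i) (v (i+1)) else E (v (i+1)) (v i)) ∨
    (d i = true ∧ v i = X1 ∧ v (i+1) = X2) ∨
    (d i = false ∧ v i = X2 ∧ v (i+1) = X1) := by
  have h := hw i hi
  rcases Bool.eq_false_or_eq_true (d i) with hb | hb
  · rw [hb] at h
    simp only [if_true] at h
    rcases (hE' _ _).mp h with h | ⟨h1, h2⟩
    · refine Or.inl ?_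
      rw [hb]
      simp only [if_true]
      exact h
    · exact Or.inr (Or.inl ⟨hb, h1, h2⟩)
  · rw [hb] at h
    simp only [Bool.false_eq_true, if_false] at h
    rcases (hE' _ _).mp h with h | ⟨h1, h2⟩
    · refine Or.inl ?_
      rw [hb]
      simp only [Bool.false_eq_true, if_false]
      exact h
    · exact Or.inr (Or.inr ⟨hb, h2, h1⟩)

include hE' hne hnanc hZ in
lemma activeCond_transfer {C : Set α} {n : ℕ} {v : ℕ → α} {d : ℕ → Bool}
    (hsub : ∀ u ∈ C, u ∈ Z ∨ u = X1) (hc : ActiveCond E' C n v d) :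
    ActiveCond E C n v d := by
  intro j hj1 hj2
  refine ⟨fun hcol => ?_, fun hncol => (hc j hj1 hj2).2 hncol⟩
  rcases (hc j hj1 hj2).1 hcol with h | ⟨w, hwC, ha⟩
  · exact Or.inl h
  · refine Or.inr ⟨w, hwC, ?_⟩
    rcases hsub w hwC with h | rfl
    · exact ancE'_Z hE' hZ h ha
    · exact ancE'_X1 hE' hne hnanc ha

include hE' hne hnanc hZ hW in
/-- L2 forward : `A1' → A1`. -/
lemma L2fwd (h : DConnected E' ((Z \ {W}) ∪ {X1}) W X2) :
    DConnected E ((Z \ {W}) ∪ {X1}) W X2 := by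
  set C : Set α := (Z \ {W}) ∪ {X1} with hC
  obtain ⟨n, v, d, h0, hn, hw⟩ := h
  have hWX2 : W ≠ X2 := fun h => hZ.2.1 (h ▸ hW)
  have hWX1 : W ≠ X1 := fun h => hZ.1 (h ▸ hW)
  obtain ⟨m, hm0, hmn, hvm, hfirst⟩ := first_occ (x := X2) hn (h0 ▸ hWX2)
  have hw' : ActiveWalk E' C m v d := activeWalk_prefix hw hmn
  have hsub : ∀ u ∈ C, u ∈ Z ∨ u = X1 := by
    intro u hu
    rcases hu with hu | hu
    · exact Or.inl hu.1
    · exact Or.inr hu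
  have hallE : IsWalk E m v d := by
    intro i hi
    rcases edge_cases hE' hw'.1 hi with h | ⟨hd, hv1, hv2⟩ | ⟨hd, hv1, hv2⟩
    · exact h
    · -- forward new edge : v i = X1, v (i+1) = X2 hence i+1 = m
      have him : i + 1 = m := by
        by_contra hne'
        exact hfirst (i+1) (by omega) hv2
      -- position i = m - 1 carries X1 and d i = true, so non-collider in C : contra
      exfalso
      rcases Nat.eq_zero_or_pos i with hi0 | hi0
      · subst hi0
        rw [h0] at hv1
        exact hWX1 hv1
      · have hcnd := hw'.2 i hi0 (by omega)
        have hnotcol : ¬ IsColliderAt d i := fun hcol => by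
          have h2 := hcol.2
          rw [hd] at h2
          exact absurd h2 (by simp)
        exact (hcnd.2 hnotcol) (by rw [hv1]; exact Or.inr rfl)
    · -- backward new edge : v i = X2 with i < m : contra
      exfalso
      rcases Nat.eq_zero_or_pos i with hi0 | hi0
      · subst hi0
        rw [h0] at hv1
        exact hWX2 hv1
      · exact hfirst i hi hv1
  exact ⟨m, v, d, h0, hvm,
    ⟨hallE, activeCond_transfer hne hZ hnanc hE' hsub hw'.2⟩⟩

include hE' hne hnanc hZ hW in
/-- L3 forward : `B0' → B0`. -/
lemma L3fwd (h : DConnected E' (Z \ {W}) W X1) : DConnected E (Z \ {W}) W X1 := by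
  set C : Set α := Z \ {W} with hC
  obtain ⟨n, v, d, h0, hn, hw⟩ := h
  have hWX2 : W ≠ X2 := fun h => hZ.2.1 (h ▸ hW)
  have hWX1 : W ≠ X1 := fun h => hZ.1 (h ▸ hW)
  obtain ⟨m, hm0, hmn, hvm, hfirst⟩ := first_occ (x := X1) hn (h0 ▸ hWX1)
  have hw' : ActiveWalk E' C m v d := activeWalk_prefix hw hmn
  have hsub : ∀ u ∈ C, u ∈ Z ∨ u = X1 := fun u hu => Or.inl hu.1
  have havoid : ∀ u ∈ C, ¬ Ancestor E' X2 u :=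
    fun u hu => (not_ancE'_X2 hE' hne hnanc hZ (Or.inl hu.1)).2
  have hW0 : ¬ Ancestor E' X2 (v 0) := by
    rw [h0]
    exact (not_ancE'_X2 hE' hne hnanc hZ (Or.inl hW)).2
  have hallE : IsWalk E m v d := by
    intro i hi
    rcases edge_cases hE' hw'.1 hi with h | ⟨hd, hv1, hv2⟩ | ⟨hd, hv1, hv2⟩
    · exact h
    · exfalso
      rcases Nat.eq_zero_or_pos i with hi0 | hi0
      · subst hi0
        rw [h0] at hv1
        exact hWX1 hv1
      · exact hfirst i hi hv1
    · exfalso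
      have him : i + 1 = m := by
        by_contra hx
        exact hfirst (i+1) (by omega) hv2
      have hi1 : 1 ≤ i := by
        rcases Nat.eq_zero_or_pos i with h' | h'
        · subst h'
          rw [h0] at hv1
          exact absurd hv1 hWX2
        · exact h'
      have hdt : d (i-1) = true := chain_lemma havoid hw' hW0 hi1 (by omega) hv1
      have hcol : IsColliderAt d i := ⟨hdt, hd⟩
      rcases (hw'.2 i hi1 (by omega)).1 hcol with hin | ⟨w, hwC, ha⟩
      · rw [hv1] at hin
        exact hZ.2.1 hin.1
      · rw [hv1] at ha
        exact havoid w hwC ha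
  exact ⟨m, v, d, h0, hvm, ⟨hallE, activeCond_transfer hne hZ hnanc hE' hsub hw'.2⟩⟩

include hE' hne hnanc hZ hW in
/-- L1 forward : `A0' → A0 ∨ B0`. -/
lemma L1fwd (h : DConnected E' (Z \ {W}) W X2) :
    DConnected E (Z \ {W}) W X2 ∨ DConnected E (Z \ {W}) W X1 := by
  set C : Set α := Z \ {W} with hC
  obtain ⟨n, v, d, h0, hn, hw⟩ := h
  have hWX2 : W ≠ X2 := fun h => hZ.2.1 (h ▸ hW)
  have hWX1 : W ≠ X1 := fun h => hZ.1 (h ▸ hW)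
  obtain ⟨m, hm0, hmn, hvm, hfirst⟩ := first_occ (x := X2) hn (h0 ▸ hWX2)
  have hw' : ActiveWalk E' C m v d := activeWalk_prefix hw hmn
  have hsub : ∀ u ∈ C, u ∈ Z ∨ u = X1 := fun u hu => Or.inl hu.1
  by_cases hall : ∀ i < m, (if d i = true then E (v i) (v (i+1)) else E (v (i+1)) (v i))
  · exact Or.inl ⟨m, v, d, h0, hvm,
      ⟨hall, activeCond_transfer hne hZ hnanc hE' hsub hw'.2⟩⟩
  · push_neg at hall
    obtain ⟨i, hi, hnE⟩ := hall
    rcases edge_cases hE' hw'.1 hi with h | ⟨hd, hv1, hv2⟩ | ⟨hd, hv1, hv2⟩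
    · exact absurd h hnE
    · have him : i + 1 = m := by
        by_contra hx
        exact hfirst (i+1) (by omega) hv2
      have hi0 : 0 < i := by
        rcases Nat.eq_zero_or_pos i with h' | h'
        · subst h'
          rw [h0] at hv1
          exact absurd hv1 hWX1
        · exact h'
      have hallE : IsWalk E i v d := by
        intro k hk
        rcases edge_cases hE' hw'.1 (show k < m by omega) with h | ⟨hd', hv1', hv2'⟩ |
          ⟨hd', hv1', hv2'⟩
        · exact h
        · exfalso
          exact hfirst (k+1) (by omega) hv2'
        · exfalso
          rcases Nat.eq_zero_or_pos k with h' | h'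
          · subst h'
            rw [h0] at hv1'
            exact hWX2 hv1'
          · exact hfirst k (by omega) hv1'
      have hwpre : ActiveWalk E' C i v d := activeWalk_prefix hw' (by omega)
      exact Or.inr ⟨i, v, d, h0, hv1,
        ⟨hallE, activeCond_transfer hne hZ hnanc hE' hsub hwpre.2⟩⟩
    · exfalso
      rcases Nat.eq_zero_or_pos i with h' | h'
      · subst h'
        rw [h0] at hv1
        exact hWX2 hv1
      · exact hfirst i hi hv1

end Main
section Main2
variable {α : Type*} {E E' : α → α → Prop} {X1 X2 W : α} {Z : Set α}

variable (hG : Acyclic E) (hne : X1 ≠ X2)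
  (hZ : NonDescSet E X1 X2 Z) (hnanc : ¬ Ancestor E X2 X1)
  (hE' : ∀ a b, E' a b ↔ (E a b ∨ (a = X1 ∧ b = X2)))
  (hW : W ∈ Z)

include hE' hne hnanc hZ hW in
/-- L4 forward : `B2' → B2 ∨ A1`. -/
lemma L4fwd (h : DConnected E' ((Z \ {W}) ∪ {X2}) W X1) :
    DConnected E ((Z \ {W}) ∪ {X2}) W X1 ∨ DConnected E ((Z \ {W}) ∪ {X1}) W X2 := by
  classical
  obtain ⟨n, v, d, h0, hn, hw⟩ := h
  have hWX2 : W ≠ X2 := fun h => hZ.2.1 (h ▸ hW)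
  have hWX1 : W ≠ X1 := fun h => hZ.1 (h ▸ hW)
  obtain ⟨m, hm0, hmn, hvm, hfirst⟩ := first_occ (x := X1) hn (h0 ▸ hWX1)
  have hw' : ActiveWalk E' ((Z \ {W}) ∪ {X2}) m v d := activeWalk_prefix hw hmn
  have hedge : ∀ i < m, (if d i = true then E (v i) (v (i+1)) else E (v (i+1)) (v i)) ∨
      (i + 1 = m ∧ v i = X2 ∧ d i = false) := by
    intro i hi
    rcases edge_cases hE' hw'.1 hi with h | ⟨hd, hv1, hv2⟩ | ⟨hd, hv1, hv2⟩
    · exact Or.inl h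
    · exfalso
      rcases Nat.eq_zero_or_pos i with h' | h'
      · subst h'
        rw [h0] at hv1
        exact hWX1 hv1
      · exact hfirst i hi hv1
    · by_cases hx : i + 1 = m
      · exact Or.inr ⟨hx, hv1, hd⟩
      · exact absurd hv2 (hfirst (i+1) (by omega))
  by_cases hallE : ∀ i < m, (if d i = true then E (v i) (v (i+1)) else E (v (i+1)) (v i))
  · -- Case (a) : the walk is an E-walk; aim at B2
    by_cases hbad : ∃ j, 0 < j ∧ j < m ∧ IsColliderAt d j ∧
        ¬ (v j ∈ (Z \ {W}) ∪ {X2} ∨ ∃ w ∈ (Z \ {W}) ∪ {X2}, Ancestor E (v j) w)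
    · set j := Nat.find hbad with hjdef
      obtain ⟨hj0, hjm, hjcol, hjact⟩ := Nat.find_spec hbad
      have hjnotin : v j ∉ (Z \ {W}) ∪ {X2} := fun h => hjact (Or.inl h)
      have hjnodesc : ∀ u, Ancestor E (v j) u → u ∉ (Z \ {W}) ∪ {X2} :=
        fun u hu hc => hjact (Or.inr ⟨u, hc, hu⟩)
      have hancX1 : Ancestor E (v j) X1 := by
        rcases (hw'.2 j hj0 hjm).1 hjcol with hin | ⟨w, hwC, ha⟩
        · exact absurd (Or.inl hin) hjact
        · rcases hwC with hw0 | hwX2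
          · exact absurd (Or.inr ⟨w, Or.inl hw0, ancE'_Z hE' hZ hw0.1 ha⟩) hjact
          · rw [Set.mem_singleton_iff] at hwX2
            rw [hwX2] at ha
            rcases ancE'_X2_cases hE' ha with h' | h' | h'
            · exact absurd (Or.inr ⟨X2, Or.inr rfl, h'⟩) hjact
            · exact absurd h' (hfirst j hjm)
            · exact h'
      obtain ⟨m2, p, hm2, hp0, hpm2, hpe, hpint⟩ := dirPath_of_anc hancX1
      have hpath : ActiveWalk E ((Z \ {W}) ∪ {X2}) m2 p (fun _ => true) :=
        activeWalk_dir hpe (fun t h1 h2 => hjnodesc _ (hpint t h1 h2).1)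
      have hwalk1 : ActiveWalk E ((Z \ {W}) ∪ {X2}) j v d := by
        refine ⟨fun k hk => hallE k (by omega), fun t ht1 ht2 => ?_⟩
        refine ⟨fun hcol => ?_, fun hncol => (hw'.2 t ht1 (by omega)).2 hncol⟩
        by_contra hx
        exact Nat.find_min hbad ht2 ⟨ht1, by omega, hcol, hx⟩
      have hcc := activeWalk_concat hwalk1 hpath hp0.symm
        (by
          intro _ _
          constructor
          · rintro ⟨_, hf⟩
            exact absurd hf (by simp)
          · intro _
            rw [hp0]
            exact hjnotin)
      obtain ⟨he0, he1⟩ := concat_ends (n2 := m2) hp0.symm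
      exact Or.inl ⟨j + m2, _, _, he0.trans h0, he1.trans hpm2, hcc⟩
    · push_neg at hbad
      exact Or.inl ⟨m, v, d, h0, hvm, ⟨hallE, fun t ht1 ht2 =>
        ⟨fun hcol => hbad t ht1 ht2 hcol, fun hncol => (hw'.2 t ht1 ht2).2 hncol⟩⟩⟩
  · -- Case (b) : last edge is the backward new edge; aim at A1
    push_neg at hallE
    obtain ⟨i, hi, hnE⟩ := hallE
    rcases hedge i hi with h | ⟨him, hviX2, hdi⟩
    · exact absurd h hnE
    have hi0 : 0 < i := by
      rcases Nat.eq_zero_or_pos i with h' | h'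
      · subst h'
        rw [h0] at hviX2
        exact absurd hviX2 hWX2
      · exact h'
    have hallEp : IsWalk E i v d := by
      intro k hk
      rcases hedge k (by omega) with h | ⟨hk1, _, _⟩
      · exact h
      · omega
    -- non-colliders of the prefix avoid C1
    have hncC1 : ∀ t, 0 < t → t < i → ¬ IsColliderAt d t → v t ∉ (Z \ {W}) ∪ {X1} := by
      intro t ht1 ht2 hncol hmem
      have hnotC2 := (hw'.2 t ht1 (by omega)).2 hncol
      rcases hmem with hm' | hm'
      · exact hnotC2 (Or.inl hm')
      · rw [Set.mem_singleton_iff] at hm'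
        exact hfirst t (by omega) hm'
    by_cases hbad : ∃ j, 0 < j ∧ j < i ∧ IsColliderAt d j ∧
        ¬ (v j ∈ (Z \ {W}) ∪ {X1} ∨ ∃ w ∈ (Z \ {W}) ∪ {X1}, Ancestor E (v j) w)
    · set j := Nat.find hbad with hjdef
      obtain ⟨hj0, hji, hjcol, hjact⟩ := Nat.find_spec hbad
      have hjnotin : v j ∉ (Z \ {W}) ∪ {X1} := fun h => hjact (Or.inl h)
      have hjnodesc : ∀ u, Ancestor E (v j) u → u ∉ (Z \ {W}) ∪ {X1} :=
        fun u hu hc => hjact (Or.inr ⟨u, hc, hu⟩)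
      have hwalk1 : ActiveWalk E ((Z \ {W}) ∪ {X1}) j v d := by
        refine ⟨fun k hk => hallEp k (by omega), fun t ht1 ht2 => ?_⟩
        refine ⟨fun hcol => ?_, fun hncol => hncC1 t ht1 (by omega) hncol⟩
        by_contra hx
        exact Nat.find_min hbad ht2 ⟨ht1, by omega, hcol, hx⟩
      -- activation of the collider j in E' given C2
      rcases (hw'.2 j hj0 (by omega)).1 hjcol with hin | ⟨w, hwC, ha⟩
      · rcases hin with hin | hin
        · exact absurd (Or.inl (Or.inl hin)) hjact
        · -- v j = X2 : truncate, giving the A1 walk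
          rw [Set.mem_singleton_iff] at hin
          exact Or.inr ⟨j, v, d, h0, hin, hwalk1⟩
      · rcases hwC with hw0 | hwX2
        · exact absurd (Or.inr ⟨w, Or.inl hw0, ancE'_Z hE' hZ hw0.1 ha⟩) hjact
        · rw [Set.mem_singleton_iff] at hwX2
          rw [hwX2] at ha
          rcases ancE'_X2_cases hE' ha with h' | h' | h'
          · -- Anc E (v j) X2 : reroute along a directed path to X2
            obtain ⟨m2, p, hm2, hp0, hpm2, hpe, hpint⟩ := dirPath_of_anc h'
            have hpath : ActiveWalk E ((Z \ {W}) ∪ {X1}) m2 p (fun _ => true) :=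
              activeWalk_dir hpe (fun t h1 h2 => hjnodesc _ (hpint t h1 h2).1)
            have hcc := activeWalk_concat hwalk1 hpath hp0.symm
              (by
                intro _ _
                constructor
                · rintro ⟨_, hf⟩
                  exact absurd hf (by simp)
                · intro _
                  rw [hp0]
                  exact hjnotin)
            obtain ⟨he0, he1⟩ := concat_ends (n2 := m2) hp0.symm
            exact Or.inr ⟨j + m2, _, _, he0.trans h0, he1.trans hpm2, hcc⟩
          · exact absurd h' (hfirst j (by omega))
          · exact absurd (Or.inr ⟨X1, Or.inr rfl, h'⟩) hjact
    · push_neg at hbad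
      exact Or.inr ⟨i, v, d, h0, hviX2, ⟨hallEp, fun t ht1 ht2 =>
        ⟨fun hcol => hbad t ht1 ht2 hcol, fun hncol => hncC1 t ht1 ht2 hncol⟩⟩⟩

end Main2
section Key
variable {α : Type*} {E : α → α → Prop} {W : α} {Z : Set α}

lemma collider_shift (e : ℕ → Bool) (k t : ℕ) (ht : 0 < t) :
    IsColliderAt (fun s => e (k + s)) t ↔ IsColliderAt e (k + t) := by
  simp only [IsColliderAt]
  have h : k + t - 1 = k + (t - 1) := by omega
  rw [h]

/-- The key conditional lemma (`u6`) : if `W –Y1` are connected given `Z∖{W}`,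
`Y1 – Y2` are connected given `Z`, and connection of `W – Y2` given
`(Z∖{W}) ∪ {Y1}` implies connection given `Z∖{W}`, then `W – Y2` are connected
given `Z∖{W}`. -/
lemma key {Y1 Y2 : α} (hY1 : Y1 ∉ Z) (hY12 : Y1 ≠ Y2) (hW : W ∈ Z)
    (hcon : DConnected E Z Y1 Y2)
    (hB : DConnected E (Z \ {W}) W Y1)
    (hH : DConnected E ((Z \ {W}) ∪ {Y1}) W Y2 → DConnected E (Z \ {W}) W Y2) :
    DConnected E (Z \ {W}) W Y2 := by
  classical
  have hWY1 : W ≠ Y1 := fun h => hY1 (h ▸ hW)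
  obtain ⟨n2, u, e, hu0, hun, hwu⟩ := hcon
  by_cases hbad : ∃ j, 0 < j ∧ j < n2 ∧ IsColliderAt e j ∧
      ¬ (u j ∈ Z \ {W} ∨ ∃ w ∈ Z \ {W}, Ancestor E (u j) w)
  · -- Case II : a collider activated only through `W`; W connects directly to Y2
    set S := (Finset.range n2).filter (fun j => 0 < j ∧ IsColliderAt e j ∧
        ¬ (u j ∈ Z \ {W} ∨ ∃ w ∈ Z \ {W}, Ancestor E (u j) w)) with hS
    have hSne : S.Nonempty := by
      obtain ⟨j, h1, h2, h3, h4⟩ := hbad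
      exact ⟨j, by
        rw [hS, Finset.mem_filter, Finset.mem_range]
        exact ⟨h2, h1, h3, h4⟩⟩
    set j := S.max' hSne with hj
    have hjS : j ∈ S := S.max'_mem hSne
    have hmax : ∀ k ∈ S, k ≤ j := fun k hk => S.le_max' k hk
    rw [hS, Finset.mem_filter, Finset.mem_range] at hjS
    obtain ⟨hjn2, hj0, hjcol, hjact⟩ := hjS
    have hjnotin : u j ∉ Z \ {W} := fun h => hjact (Or.inl h)
    -- the suffix from j is active given Z \ {W}
    have hsuf : ActiveWalk E (Z \ {W}) (n2 - j) (fun t => u (j + t)) (fun t => e (j + t)) := by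
      refine ⟨(activeWalk_suffix hwu (le_of_lt hjn2)).1, fun t ht1 ht2 => ?_⟩
      constructor
      · intro hcol
        have hcol' := (collider_shift e j t ht1).mp hcol
        by_contra hx
        have hmem : j + t ∈ S := by
          rw [hS, Finset.mem_filter, Finset.mem_range]
          exact ⟨by omega, by omega, hcol', hx⟩
        have := hmax _ hmem
        omega
      · intro hncol
        have h2 := (hwu.2 (j + t) (by omega) (by omega)).2
          (fun hc => hncol ((collider_shift e j t ht1).mpr hc))
        exact fun hmem => h2 hmem.1
    by_cases hjW : u j = W
    · refine ⟨n2 - j, _, _, by simpa using hjW, ?_, hsuf⟩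
      show u (j + (n2 - j)) = Y2
      rw [show j + (n2 - j) = n2 by omega, hun]
    · rcases (hwu.2 j hj0 hjn2).1 hjcol with hin | ⟨w, hwZ, ha⟩
      · exact absurd (Or.inl ⟨hin, by simpa using hjW⟩) hjact
      · have hwW : w = W := by
          by_contra hx
          exact hjact (Or.inr ⟨w, ⟨hwZ, by simpa using hx⟩, ha⟩)
        rw [hwW] at ha
        obtain ⟨m3, p, hm3, hp0, hpm3, hpe, hpint⟩ := dirPath_of_anc ha
        have hint : ∀ t, 0 < t → t < m3 → p t ∉ Z \ {W} :=
          fun t h1 h2 hc => hjact (Or.inr ⟨p t, hc, (hpint t h1 h2).1⟩)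
        have hdir : ActiveWalk E (Z \ {W}) m3 p (fun _ => true) := activeWalk_dir hpe hint
        have hrev := activeWalk_reverse hdir
        have hjoin : (fun t => p (m3 - t)) m3 = (fun t => u (j + t)) 0 := by
          show p (m3 - m3) = u (j + 0)
          rw [Nat.sub_self, hp0, Nat.add_zero]
        have hcc := activeWalk_concat hrev hsuf hjoin
          (by
            intro _ _
            constructor
            · rintro ⟨hf, _⟩
              simp at hf
            · intro _
              show u (j + 0) ∉ Z \ {W}
              simpa using hjnotin)
        obtain ⟨he0, he1⟩ := concat_ends (n1 := m3) (n2 := n2 - j)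
          (v1 := fun t => p (m3 - t)) (v2 := fun t => u (j + t)) hjoin
        refine ⟨m3 + (n2 - j), _, _, he0.trans ?_, he1.trans ?_, hcc⟩
        · rw [Nat.sub_zero, hpm3]
        · show u (j + (n2 - j)) = Y2
          rw [show j + (n2 - j) = n2 by omega, hun]
  · -- Case I : all colliders are activated without W; splice the two walks at Y1
    push_neg at hbad
    -- last occurrence of Y1 along u
    have hur : (fun t => u (n2 - t)) n2 = Y1 := by
      show u (n2 - n2) = Y1
      rw [Nat.sub_self, hu0]
    have hur0 : (fun t => u (n2 - t)) 0 ≠ Y1 := by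
      show u (n2 - 0) ≠ Y1
      rw [Nat.sub_zero, hun]
      exact fun h => hY12 h.symm
    obtain ⟨m', hm'0, hm'n, hurm', hurfirst⟩ :=
      first_occ (v := fun t => u (n2 - t)) (n := n2) (x := Y1) hur hur0
    set k := n2 - m' with hk
    have hukY1 : u k = Y1 := hurm'
    have hnoY1 : ∀ t, 0 < t → t ≤ m' → u (k + t) ≠ Y1 := by
      intro t h1 h2 hc
      exact hurfirst (n2 - (k + t)) (by omega) (by
        show u (n2 - (n2 - (k + t))) = Y1
        rw [show n2 - (n2 - (k + t)) = k + t by omega]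
        exact hc)
    -- the suffix σ from k, active given both C0 and C1
    have hsufC0 : ActiveWalk E (Z \ {W}) m' (fun t => u (k + t)) (fun t => e (k + t)) := by
      refine ⟨fun i hi => by simpa [Nat.add_assoc] using hwu.1 (k + i) (by omega),
        fun t ht1 ht2 => ?_⟩
      constructor
      · intro hcol
        exact hbad (k + t) (by omega) (by omega) ((collider_shift e k t ht1).mp hcol)
      · intro hncol
        have h2 := (hwu.2 (k + t) (by omega) (by omega)).2
          (fun hc => hncol ((collider_shift e k t ht1).mpr hc))
        exact fun hmem => h2 hmem.1
    have hsufC1 : ActiveWalk E ((Z \ {W}) ∪ {Y1}) m' (fun t => u (k + t))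
        (fun t => e (k + t)) := by
      refine ⟨hsufC0.1, fun t ht1 ht2 => ?_⟩
      constructor
      · intro hcol
        rcases (hsufC0.2 t ht1 ht2).1 hcol with h | ⟨w, hw', ha⟩
        · exact Or.inl (Or.inl h)
        · exact Or.inr ⟨w, Or.inl hw', ha⟩
      · intro hncol hmem
        rcases hmem with h | h
        · exact (hsufC0.2 t ht1 ht2).2 hncol h
        · exact hnoY1 t ht1 (by omega) h
    -- the walk τ from hB truncated at the first Y1
    obtain ⟨n1, v1, d1, hv10, hv1n, hw1⟩ := hB
    obtain ⟨m1, hm10, hm1n, hv1m1, hfirst1⟩ := first_occ (x := Y1) hv1n (hv10 ▸ hWY1)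
    have hw1' : ActiveWalk E (Z \ {W}) m1 v1 d1 := activeWalk_prefix hw1 hm1n
    have hw1C1 : ActiveWalk E ((Z \ {W}) ∪ {Y1}) m1 v1 d1 := by
      refine ⟨hw1'.1, fun t ht1 ht2 => ?_⟩
      constructor
      · intro hcol
        rcases (hw1'.2 t ht1 ht2).1 hcol with h | ⟨w, hw', ha⟩
        · exact Or.inl (Or.inl h)
        · exact Or.inr ⟨w, Or.inl hw', ha⟩
      · intro hncol hmem
        rcases hmem with h | h
        · exact (hw1'.2 t ht1 ht2).2 hncol h
        · exact hfirst1 t ht2 h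
    have hjoin : v1 m1 = (fun t => u (k + t)) 0 := by
      show v1 m1 = u (k + 0)
      rw [hv1m1, Nat.add_zero, hukY1]
    have hends := concat_ends (n1 := m1) (n2 := m') (v1 := v1)
      (v2 := fun t => u (k + t)) hjoin
    have hendY2 : (fun t => u (k + t)) m' = Y2 := by
      show u (k + m') = Y2
      rw [show k + m' = n2 by omega, hun]
    by_cases hconf : d1 (m1 - 1) = true ∧ (fun t => e (k + t)) 0 = false
    · -- junction is a collider : use C1 and the hypothesis hH
      have hcc := activeWalk_concat hw1C1 hsufC1 hjoin
        (by
          intro _ _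
          refine ⟨fun _ => Or.inl ?_, fun hn => absurd hconf hn⟩
          show u (k + 0) ∈ (Z \ {W}) ∪ {Y1}
          rw [Nat.add_zero, hukY1]
          exact Or.inr rfl)
      exact hH ⟨m1 + m', _, _, hends.1.trans hv10, hends.2.trans hendY2, hcc⟩
    · -- junction is a non-collider : stay with C0
      have hcc := activeWalk_concat hw1' hsufC0 hjoin
        (by
          intro _ _
          refine ⟨fun hx => absurd hx hconf, fun _ => ?_⟩
          show u (k + 0) ∉ Z \ {W}
          rw [Nat.add_zero, hukY1]
          exact fun hmem => hY1 hmem.1)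
      exact ⟨m1 + m', _, _, hends.1.trans hv10, hends.2.trans hendY2, hcc⟩

end Key
section Assembly
variable {α : Type*} {E F : α → α → Prop} {C : Set α} {x y : α}

lemma dconn_mono (h : ∀ a b, E a b → F a b) (hc : DConnected E C x y) :
    DConnected F C x y := by
  obtain ⟨n, v, d, h0, hn, hw⟩ := hc
  exact ⟨n, v, d, h0, hn, activeWalk_mono h hw⟩

end Assembly

/-- Core of the completeness theorem (bivariate case): if in the DAG `G` the vertices
`X1` and `X2` are d-connected given the non-descendant set `Z` and none of the four
(de)activation patterns holds for any `W ∈ Z`, then the same is true in the DAG `G'`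
obtained from `G` by adding the edge `X1 → X2`; hence the lazy oracle cannot
distinguish `G` from `G'`. -/
theorem oracle_indistinguishable_add_edge {α : Type*} [Fintype α] (E : α → α → Prop)
    (hG : Acyclic E) (X1 X2 : α) (hne : X1 ≠ X2) (Z : Set α)
    (hZ : NonDescSet E X1 X2 Z) (hnanc : ¬ Ancestor E X2 X1)
    (E' : α → α → Prop) (hE' : E' = fun a b => E a b ∨ (a = X1 ∧ b = X2))
    (hcon : DConnected E Z X1 X2)
    (hpat : ∀ W ∈ Z, ¬ SomePattern E Z X1 X2 W) :
    DConnected E' Z X1 X2 ∧ ∀ W ∈ Z, ¬ SomePattern E' Z X1 X2 W := by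
  have hE2 : ∀ a b, E' a b ↔ (E a b ∨ (a = X1 ∧ b = X2)) := by
    subst hE'
    exact fun a b => Iff.rfl
  have hEsub : ∀ a b, E a b → E' a b := fun a b h => (hE2 a b).mpr (Or.inl h)
  have hedge : E' X1 X2 := (hE2 X1 X2).mpr (Or.inr ⟨rfl, rfl⟩)
  constructor
  · exact ⟨1, fun i => if i = 0 then X1 else X2, fun _ => true, by simp, by simp,
      activeWalk_single_fwd hedge⟩
  · intro W hW hq
    have hp := hpat W hW
    have hA01 : DConnected E (Z \ {W}) W X2 → DConnected E ((Z \ {W}) ∪ {X1}) W X2 := by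
      intro h
      by_contra hx
      exact hp (Or.inl ⟨h, hx⟩)
    have hA10 : DConnected E ((Z \ {W}) ∪ {X1}) W X2 → DConnected E (Z \ {W}) W X2 := by
      intro h
      by_contra hx
      exact hp (Or.inr (Or.inr (Or.inl ⟨hx, h⟩)))
    have hB02 : DConnected E (Z \ {W}) W X1 → DConnected E ((Z \ {W}) ∪ {X2}) W X1 := by
      intro h
      by_contra hx
      exact hp (Or.inr (Or.inl ⟨h, hx⟩))
    have hB20 : DConnected E ((Z \ {W}) ∪ {X2}) W X1 → DConnected E (Z \ {W}) W X1 := by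
      intro h
      by_contra hx
      exact hp (Or.inr (Or.inr (Or.inr ⟨hx, h⟩)))
    have hB0toA0 : DConnected E (Z \ {W}) W X1 → DConnected E (Z \ {W}) W X2 :=
      fun hB => key hZ.1 hne hW hcon hB hA10
    have hA0toB0 : DConnected E (Z \ {W}) W X2 → DConnected E (Z \ {W}) W X1 :=
      fun hA => key hZ.2.1 hne.symm hW (dconn_symm hcon) hA hB20
    rcases hq with ⟨hA0', hnA1'⟩ | ⟨hB0', hnB2'⟩ | ⟨hnA0', hA1'⟩ | ⟨hnB0', hB2'⟩
    · have hA0 : DConnected E (Z \ {W}) W X2 := by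
        rcases L1fwd (hne := hne) (hZ := hZ) (hnanc := hnanc) (hE' := hE2) (hW := hW)
          hA0' with h | h
        · exact h
        · exact hB0toA0 h
      exact hnA1' (dconn_mono hEsub (hA01 hA0))
    · have hB0 := L3fwd (hne := hne) (hZ := hZ) (hnanc := hnanc) (hE' := hE2) (hW := hW) hB0'
      exact hnB2' (dconn_mono hEsub (hB02 hB0))
    · have hA1 := L2fwd (hne := hne) (hZ := hZ) (hnanc := hnanc) (hE' := hE2) (hW := hW) hA1'
      exact hnA0' (dconn_mono hEsub (hA10 hA1))
    · have hB0 : DConnected E (Z \ {W}) W X1 := by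
        rcases L4fwd (hne := hne) (hZ := hZ) (hnanc := hnanc) (hE' := hE2) (hW := hW)
          hB2' with h | h
        · exact hB20 h
        · exact hA0toB0 (hA10 h)
      exact hnB0' (dconn_mono hEsub hB0)
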